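/- Let w ∈ C² on the union Q = K¹ ∪ K² of two triangles forming the parallelogram pattern: K¹ has vertices (x_i,y_j), (x_{i+1},y_j), (x_i,y_{j+1}) and K² has vertices (x_i,y_j), (x_{i+1},y_{j−1}), (x_{i+1},y_j), where h_x = x_{i+1} − x_i and the two vertical steps are equal: y_{j+1} − y_j = y_j − y_{j−1} = h_y. If v is continuous and piecewise linear on Q (linear on each triangle) with the same x-derivative constant c on all of Q, then |∫_Q (w − w^I)_x · v_x dx dy| ≤ C Σ_{l+m=2} h_x^l h_y^m ‖∂_x^{l+1} ∂_y^m w‖_{L^∞(Q)} · ‖v_x‖_{L¹(Q)} for a constant C independent of w, v, h_x, h_y. -/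

import Mathlib

open MeasureTheory Set

noncomputable def pdx (f : ℝ × ℝ → ℝ) : ℝ × ℝ → ℝ := fun p => deriv (fun t => f (t, p.2)) p.1

noncomputable def pdy (f : ℝ × ℝ → ℝ) : ℝ × ℝ → ℝ := fun p => deriv (fun t => f (p.1, t)) p.2

/-- `K¹`: the closed right triangle with vertices `(xi,yj)`, `(xi+hx,yj)`, `(xi,yj+hy)` -/
def tri (xi yj hx hy : ℝ) : Set (ℝ × ℝ) :=
  {p | xi ≤ p.1 ∧ yj ≤ p.2 ∧ (p.1 - xi) / hx + (p.2 - yj) / hy ≤ 1}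

/-- `K²`: the closed right triangle with vertices `(xi,yj)`, `(xi+hx,yj-hy)`, `(xi+hx,yj)` -/
def tri2 (xi yj hx hy : ℝ) : Set (ℝ × ℝ) :=
  {p | p.1 ≤ xi + hx ∧ p.2 ≤ yj ∧ 1 ≤ (p.1 - xi) / hx + (p.2 - (yj - hy)) / hy}

/-- affine interpolant of `w` at the vertices of `tri xi yj hx hy` -/
noncomputable def interp (w : ℝ × ℝ → ℝ) (xi yj hx hy : ℝ) : ℝ × ℝ → ℝ :=
  fun p => w (xi, yj) * (1 - (p.1 - xi) / hx - (p.2 - yj) / hy)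
    + w (xi + hx, yj) * ((p.1 - xi) / hx) + w (xi, yj + hy) * ((p.2 - yj) / hy)

/-- affine interpolant of `w` at the vertices of `tri2 xi yj hx hy` -/
noncomputable def interp2 (w : ℝ × ℝ → ℝ) (xi yj hx hy : ℝ) : ℝ × ℝ → ℝ :=
  fun p => w (xi, yj) * ((xi + hx - p.1) / hx) + w (xi + hx, yj - hy) * ((yj - p.2) / hy)
    + w (xi + hx, yj) * (1 - (xi + hx - p.1) / hx - (yj - p.2) / hy)

/-! ### Auxiliary lemmas -/

lemma hasDerivAt_sliceX (f : ℝ × ℝ → ℝ) (hf : Differentiable ℝ f) (x y : ℝ) :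
    HasDerivAt (fun t => f (t, y)) (fderiv ℝ f (x, y) (1, 0)) x := by
  have h1 := (hf (x, y)).hasFDerivAt
  have h2 : HasDerivAt (fun t : ℝ => (t, y)) ((1 : ℝ), (0 : ℝ)) x :=
    (hasDerivAt_id x).prodMk (hasDerivAt_const x y)
  exact h1.comp_hasDerivAt x h2

lemma hasDerivAt_sliceY (f : ℝ × ℝ → ℝ) (hf : Differentiable ℝ f) (x y : ℝ) :
    HasDerivAt (fun t => f (x, t)) (fderiv ℝ f (x, y) (0, 1)) y := by
  have h1 := (hf (x, y)).hasFDerivAt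
  have h2 : HasDerivAt (fun t : ℝ => (x, t)) ((0 : ℝ), (1 : ℝ)) y :=
    (hasDerivAt_const y x).prodMk (hasDerivAt_id y)
  exact h1.comp_hasDerivAt y h2

lemma pdx_eq (f : ℝ × ℝ → ℝ) (hf : Differentiable ℝ f) (p : ℝ × ℝ) :
    pdx f p = fderiv ℝ f p (1, 0) := (hasDerivAt_sliceX f hf p.1 p.2).deriv

lemma pdy_eq (f : ℝ × ℝ → ℝ) (hf : Differentiable ℝ f) (p : ℝ × ℝ) :
    pdy f p = fderiv ℝ f p (0, 1) := (hasDerivAt_sliceY f hf p.1 p.2).deriv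

lemma hasDerivAt_pdx (f : ℝ × ℝ → ℝ) (hf : Differentiable ℝ f) (x y : ℝ) :
    HasDerivAt (fun t => f (t, y)) (pdx f (x, y)) x := by
  have h := hasDerivAt_sliceX f hf x y
  rwa [← pdx_eq f hf (x, y)] at h

lemma hasDerivAt_pdy (f : ℝ × ℝ → ℝ) (hf : Differentiable ℝ f) (x y : ℝ) :
    HasDerivAt (fun t => f (x, t)) (pdy f (x, y)) y := by
  have h := hasDerivAt_sliceY f hf x y
  rwa [← pdy_eq f hf (x, y)] at h

lemma contDiff_pdx (f : ℝ × ℝ → ℝ) (n : ℕ) (hf : ContDiff ℝ (n + 1) f) :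
    ContDiff ℝ n (pdx f) := by
  have : pdx f = fun p => fderiv ℝ f p (1, 0) :=
    funext fun p => pdx_eq f (hf.differentiable (by simp)) p
  rw [this]
  exact (hf.fderiv_right (by exact_mod_cast le_rfl)).clm_apply contDiff_const

lemma contDiff_pdy (f : ℝ × ℝ → ℝ) (n : ℕ) (hf : ContDiff ℝ (n + 1) f) :
    ContDiff ℝ n (pdy f) := by
  have : pdy f = fun p => fderiv ℝ f p (0, 1) :=
    funext fun p => pdy_eq f (hf.differentiable (by simp)) p
  rw [this]
  exact (hf.fderiv_right (by exact_mod_cast le_rfl)).clm_apply contDiff_const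

lemma pdx_pdy_comm (f : ℝ × ℝ → ℝ) (hf : ContDiff ℝ 2 f) (p : ℝ × ℝ) :
    pdx (pdy f) p = pdy (pdx f) p := by
  set g := fderiv ℝ f with hg
  have hfd : Differentiable ℝ f := hf.differentiable (by norm_num)
  have hgc : ContDiff ℝ 1 g := hf.fderiv_right (by norm_num)
  have hgd : Differentiable ℝ g := hgc.differentiable one_ne_zero
  have hsym : ∀ v u : ℝ × ℝ, fderiv ℝ g p v u = fderiv ℝ g p u v := by
    intro v u
    exact second_derivative_symmetric (fun y => (hfd y).hasFDerivAt) (hgd p).hasFDerivAt v u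
  have hx : pdx (pdy f) p = fderiv ℝ g p (1, 0) (0, 1) := by
    have heq : (fun q : ℝ × ℝ => pdy f q) = fun q => g q (0, 1) := funext fun q => pdy_eq f hfd q
    have hD : HasDerivAt (fun t => g (t, p.2) (0, 1)) (fderiv ℝ g p (1, 0) (0, 1)) p.1 := by
      have h1 : HasFDerivAt g (fderiv ℝ g p) (p.1, p.2) := by
        simpa using (hgd p).hasFDerivAt
      have h2 : HasDerivAt (fun t : ℝ => (t, p.2)) ((1 : ℝ), (0 : ℝ)) p.1 :=
        (hasDerivAt_id p.1).prodMk (hasDerivAt_const p.1 p.2)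
      have h3 : HasDerivAt (fun t => g (t, p.2)) (fderiv ℝ g p (1, 0)) p.1 :=
        h1.comp_hasDerivAt p.1 h2
      exact (h3.clm_apply (hasDerivAt_const _ _)).congr_deriv (by simp)
    simp only [pdx, heq]
    exact hD.deriv
  have hy : pdy (pdx f) p = fderiv ℝ g p (0, 1) (1, 0) := by
    have heq : (fun q : ℝ × ℝ => pdx f q) = fun q => g q (1, 0) := funext fun q => pdx_eq f hfd q
    have hD : HasDerivAt (fun t => g (p.1, t) (1, 0)) (fderiv ℝ g p (0, 1) (1, 0)) p.2 := by
      have h1 : HasFDerivAt g (fderiv ℝ g p) (p.1, p.2) := by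
        simpa using (hgd p).hasFDerivAt
      have h2 : HasDerivAt (fun t : ℝ => (p.1, t)) ((0 : ℝ), (1 : ℝ)) p.2 :=
        (hasDerivAt_const p.2 p.1).prodMk (hasDerivAt_id p.2)
      have h3 : HasDerivAt (fun t => g (p.1, t)) (fderiv ℝ g p (0, 1)) p.2 :=
        h1.comp_hasDerivAt p.2 h2
      exact (h3.clm_apply (hasDerivAt_const _ _)).congr_deriv (by simp)
    simp only [pdy, heq]
    exact hD.deriv
  rw [hx, hy, hsym]

lemma ftcX (f : ℝ × ℝ → ℝ) (hd : Differentiable ℝ f) (hc : Continuous (pdx f)) (σ a b : ℝ) :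
    f (b, σ) - f (a, σ) = ∫ t in a..b, pdx f (t, σ) := by
  have hD : ∀ t ∈ uIcc a b, HasDerivAt (fun x => f (x, σ)) (pdx f (t, σ)) t :=
    fun t _ => hasDerivAt_pdx f hd t σ
  rw [intervalIntegral.integral_eq_sub_of_hasDerivAt hD
    ((hc.comp (continuous_id.prodMk continuous_const)).intervalIntegrable _ _)]

lemma ftcY (f : ℝ × ℝ → ℝ) (hd : Differentiable ℝ f) (hc : Continuous (pdy f)) (t a b : ℝ) :
    f (t, b) - f (t, a) = ∫ σ in a..b, pdy f (t, σ) := by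
  have hD : ∀ σ ∈ uIcc a b, HasDerivAt (fun y => f (t, y)) (pdy f (t, σ)) σ :=
    fun σ _ => hasDerivAt_pdy f hd t σ
  rw [intervalIntegral.integral_eq_sub_of_hasDerivAt hD
    ((hc.comp (continuous_const.prodMk continuous_id)).intervalIntegrable _ _)]

lemma ftcX_bound (f : ℝ × ℝ → ℝ) (hd : Differentiable ℝ f) (hc : Continuous (pdx f))
    (σ a b M : ℝ) (hM : ∀ t ∈ uIcc a b, |pdx f (t, σ)| ≤ M) :
    |f (b, σ) - f (a, σ)| ≤ M * |b - a| := by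
  rw [ftcX f hd hc σ a b]
  have := intervalIntegral.norm_integral_le_of_norm_le_const (a := a) (b := b) (C := M)
    (f := fun t => pdx f (t, σ))
    (fun t ht => by simpa [Real.norm_eq_abs] using hM t (uIoc_subset_uIcc ht))
  simpa [Real.norm_eq_abs] using this

lemma ftcY_bound (f : ℝ × ℝ → ℝ) (hd : Differentiable ℝ f) (hc : Continuous (pdy f))
    (t a b M : ℝ) (hM : ∀ σ ∈ uIcc a b, |pdy f (t, σ)| ≤ M) :
    |f (t, b) - f (t, a)| ≤ M * |b - a| := by
  rw [ftcY f hd hc t a b]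
  have := intervalIntegral.norm_integral_le_of_norm_le_const (a := a) (b := b) (C := M)
    (f := fun σ => pdy f (t, σ))
    (fun σ hσ => by simpa [Real.norm_eq_abs] using hM σ (uIoc_subset_uIcc hσ))
  simpa [Real.norm_eq_abs] using this

lemma setIntegral_region (f : ℝ × ℝ → ℝ) (hf : Continuous f) (a b : ℝ) (α β : ℝ → ℝ)
    (hab : a ≤ b) (hαβ : ∀ y ∈ Icc a b, α y ≤ β y)
    (s : Set (ℝ × ℝ)) (hcomp : IsCompact s) (hmeas : MeasurableSet s)
    (hs : ∀ p : ℝ × ℝ, p ∈ s ↔ p.2 ∈ Icc a b ∧ p.1 ∈ Icc (α p.2) (β p.2)) :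
    ∫ p in s, f p = ∫ y in a..b, ∫ x in (α y)..(β y), f (x, y) := by
  have hIntOn : IntegrableOn f s := hf.continuousOn.integrableOn_compact hcomp
  have hInd : Integrable (s.indicator f) := (integrable_indicator_iff hmeas).2 hIntOn
  rw [← integral_indicator hmeas]
  rw [MeasureTheory.Measure.volume_eq_prod ℝ ℝ]
  rw [integral_prod_symm _ (by rwa [← MeasureTheory.Measure.volume_eq_prod ℝ ℝ])]
  have key : (fun y => ∫ x, s.indicator f (x, y)) =
      (Icc a b).indicator (fun y => ∫ x in (α y)..(β y), f (x, y)) := by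
    funext y
    by_cases hy : y ∈ Icc a b
    · have h1 : (fun x => s.indicator f (x, y)) =
          (Icc (α y) (β y)).indicator (fun x => f (x, y)) := by
        funext x
        by_cases hx : x ∈ Icc (α y) (β y)
        · have hm : (x, y) ∈ s := (hs (x, y)).2 ⟨hy, hx⟩
          simp [indicator_of_mem, hm, hx]
        · have hm : (x, y) ∉ s := fun h => hx ((hs (x, y)).1 h).2
          simp [indicator_of_notMem, hm, hx]
      rw [h1, integral_indicator measurableSet_Icc, indicator_of_mem hy,
        intervalIntegral.integral_of_le (hαβ y hy), integral_Icc_eq_integral_Ioc]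
    · have h1 : (fun x => s.indicator f (x, y)) = fun _ => 0 := by
        funext x
        have hm : (x, y) ∉ s := fun h => hy ((hs (x, y)).1 h).1
        simp [indicator_of_notMem, hm]
      rw [h1, indicator_of_notMem hy]
      simp
  rw [key, integral_indicator measurableSet_Icc, integral_Icc_eq_integral_Ioc,
    ← intervalIntegral.integral_of_le hab]

section Geometry

variable {xi yj hx hy : ℝ}

lemma tri_mem_iff (hhx : 0 < hx) (hhy : 0 < hy) (p : ℝ × ℝ) :
    p ∈ tri xi yj hx hy ↔
      p.2 ∈ Icc yj (yj + hy) ∧ p.1 ∈ Icc xi (xi + hx * (1 - (p.2 - yj) / hy)) := by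
  obtain ⟨x, y⟩ := p
  have k1 : ((x - xi) / hx + (y - yj) / hy ≤ 1) ↔ (x - xi) * hy + (y - yj) * hx ≤ hx * hy := by
    rw [div_add_div _ _ hhx.ne' hhy.ne', div_le_one (by positivity)]
    constructor <;> intro h <;> nlinarith
  have k2 : (x ≤ xi + hx * (1 - (y - yj) / hy)) ↔ (x - xi) * hy + (y - yj) * hx ≤ hx * hy := by
    rw [show xi + hx * (1 - (y - yj) / hy) = xi + (hx * hy - (y - yj) * hx) / hy by
      field_simp]
    rw [← sub_le_iff_le_add', le_div_iff₀ hhy]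
    constructor <;> intro h <;> nlinarith
  simp only [tri, mem_setOf_eq, mem_Icc, k1, k2]
  constructor
  · rintro ⟨h1, h2, h3⟩
    exact ⟨⟨h2, by nlinarith⟩, h1, h3⟩
  · rintro ⟨⟨h1, h2⟩, h3, h4⟩
    exact ⟨h3, h1, h4⟩

lemma tri2_mem_iff (hhx : 0 < hx) (hhy : 0 < hy) (p : ℝ × ℝ) :
    p ∈ tri2 xi yj hx hy ↔
      p.2 ∈ Icc (yj - hy) yj ∧ p.1 ∈ Icc (xi + hx * ((yj - p.2) / hy)) (xi + hx) := by
  obtain ⟨x, y⟩ := p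
  have k1 : (1 ≤ (x - xi) / hx + (y - (yj - hy)) / hy) ↔
      hx * hy ≤ (x - xi) * hy + (y - (yj - hy)) * hx := by
    rw [div_add_div _ _ hhx.ne' hhy.ne', le_div_iff₀ (by positivity)]
    constructor <;> intro h <;> nlinarith
  have k2 : (xi + hx * ((yj - y) / hy) ≤ x) ↔
      hx * hy ≤ (x - xi) * hy + (y - (yj - hy)) * hx := by
    rw [show xi + hx * ((yj - y) / hy) = xi + hx * (yj - y) / hy by ring]
    rw [← le_sub_iff_add_le', div_le_iff₀ hhy]
    constructor <;> intro h <;> nlinarith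
  simp only [tri2, mem_setOf_eq, mem_Icc, k1, k2]
  constructor
  · rintro ⟨h1, h2, h3⟩
    exact ⟨⟨by nlinarith, h2⟩, h3, h1⟩
  · rintro ⟨⟨h1, h2⟩, h3, h4⟩
    exact ⟨h4, h2, h3⟩

lemma isClosed_tri : IsClosed (tri xi yj hx hy) := by
  have : tri xi yj hx hy = {p : ℝ × ℝ | xi ≤ p.1} ∩
      ({p | yj ≤ p.2} ∩ {p | (p.1 - xi) / hx + (p.2 - yj) / hy ≤ 1}) := rfl
  rw [this]
  exact (isClosed_le continuous_const continuous_fst).inter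
    ((isClosed_le continuous_const continuous_snd).inter
      (isClosed_le (by fun_prop) continuous_const))

lemma isClosed_tri2 : IsClosed (tri2 xi yj hx hy) := by
  have : tri2 xi yj hx hy = {p : ℝ × ℝ | p.1 ≤ xi + hx} ∩
      ({p | p.2 ≤ yj} ∩ {p | 1 ≤ (p.1 - xi) / hx + (p.2 - (yj - hy)) / hy}) := rfl
  rw [this]
  exact (isClosed_le continuous_fst continuous_const).inter
    ((isClosed_le continuous_snd continuous_const).inter
      (isClosed_le continuous_const (by fun_prop)))

lemma isCompact_tri (hhx : 0 < hx) (hhy : 0 < hy) : IsCompact (tri xi yj hx hy) := by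
  refine IsCompact.of_isClosed_subset (isCompact_Icc (a := (xi, yj)) (b := (xi + hx, yj + hy)))
    isClosed_tri ?_
  intro p hp
  rw [tri_mem_iff hhx hhy] at hp
  obtain ⟨⟨h1, h2⟩, h3, h4⟩ := hp
  have hb : xi + hx * (1 - (p.2 - yj) / hy) ≤ xi + hx := by
    have : 0 ≤ (p.2 - yj) / hy := div_nonneg (by linarith) hhy.le
    nlinarith
  exact ⟨⟨h3, h1⟩, ⟨le_trans h4 hb, h2⟩⟩

lemma isCompact_tri2 (hhx : 0 < hx) (hhy : 0 < hy) : IsCompact (tri2 xi yj hx hy) := by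
  refine IsCompact.of_isClosed_subset (isCompact_Icc (a := (xi, yj - hy)) (b := (xi + hx, yj)))
    isClosed_tri2 ?_
  intro p hp
  rw [tri2_mem_iff hhx hhy] at hp
  obtain ⟨⟨h1, h2⟩, h3, h4⟩ := hp
  have hb : xi ≤ xi + hx * ((yj - p.2) / hy) := by
    have : 0 ≤ (yj - p.2) / hy := div_nonneg (by linarith) hhy.le
    nlinarith
  exact ⟨⟨le_trans hb h3, h1⟩, ⟨h4, h2⟩⟩

end Geometry

set_option maxHeartbeats 2000000 in
/-- On `Q = K¹ ∪ K²` (equal vertical steps), for a continuous piecewise linear `v`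
whose x-derivative is the single constant `cv` on `Q`,
`|∫_Q (w - wᴵ)_x v_x| ≤ C Σ_{l+m=2} hx^l hy^m ‖∂_x^{l+1}∂_y^m w‖_{L^∞(Q)} ‖v_x‖_{L¹(Q)}`,
where `‖v_x‖_{L¹(Q)} = |cv|·hx·hy`. -/
theorem stmt2 :
    ∃ C > 0, ∀ (w v : ℝ × ℝ → ℝ) (xi yj hx hy cv b1 d1 b2 d2 Mxxx Mxxy Mxyy : ℝ),
      0 < hx → 0 < hy → ContDiff ℝ 3 w → Continuous v →
      (∀ p ∈ tri xi yj hx hy, v p = cv * p.1 + b1 * p.2 + d1) →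
      (∀ p ∈ tri2 xi yj hx hy, v p = cv * p.1 + b2 * p.2 + d2) →
      (∀ p ∈ tri xi yj hx hy ∪ tri2 xi yj hx hy, |pdx (pdx (pdx w)) p| ≤ Mxxx) →
      (∀ p ∈ tri xi yj hx hy ∪ tri2 xi yj hx hy, |pdy (pdx (pdx w)) p| ≤ Mxxy) →
      (∀ p ∈ tri xi yj hx hy ∪ tri2 xi yj hx hy, |pdy (pdy (pdx w)) p| ≤ Mxyy) →
      |(∫ p in tri xi yj hx hy, pdx (fun q => w q - interp w xi yj hx hy q) p * cv)
        + ∫ p in tri2 xi yj hx hy, pdx (fun q => w q - interp2 w xi yj hx hy q) p * cv|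
      ≤ C * (hx ^ 2 * Mxxx + hx * hy * Mxxy + hy ^ 2 * Mxyy) * (|cv| * (hx * hy)) := by
  refine ⟨2, by norm_num, ?_⟩
  intro w v xi yj hx hy cv b1 d1 b2 d2 Mxxx Mxxy Mxyy hhx hhy hw hv hv1 hv2 hM1 hM2 hM3
  clear hv hv1 hv2
  -- basic regularity
  have hw3 : ContDiff ℝ ((2 : ℕ) + 1) w := by exact_mod_cast hw
  have hwd : Differentiable ℝ w := hw.differentiable (by norm_num)
  have hwc : Continuous w := hwd.continuous
  have hψ2 : ContDiff ℝ 2 (pdx w) := by exact_mod_cast contDiff_pdx w 2 hw3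
  have hψ2' : ContDiff ℝ ((1 : ℕ) + 1) (pdx w) := by exact_mod_cast hψ2
  have hψd : Differentiable ℝ (pdx w) := hψ2.differentiable (by norm_num)
  have hψc : Continuous (pdx w) := hψd.continuous
  have hμ1 : ContDiff ℝ 1 (pdy (pdx w)) := by exact_mod_cast contDiff_pdy (pdx w) 1 hψ2'
  have hμ1' : ContDiff ℝ ((0 : ℕ) + 1) (pdy (pdx w)) := by exact_mod_cast hμ1
  have hμd : Differentiable ℝ (pdy (pdx w)) := hμ1.differentiable one_ne_zero
  have hμc : Continuous (pdy (pdx w)) := hμd.continuous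
  have hpdxμc : Continuous (pdx (pdy (pdx w))) := (contDiff_pdx _ 0 hμ1').continuous
  have hpdyμc : Continuous (pdy (pdy (pdx w))) := (contDiff_pdy _ 0 hμ1').continuous
  -- bound transfer via symmetry of second derivatives
  have hMxxy' : ∀ p ∈ tri xi yj hx hy ∪ tri2 xi yj hx hy, |pdx (pdy (pdx w)) p| ≤ Mxxy := by
    intro p hp
    rw [pdx_pdy_comm (pdx w) hψ2 p]
    exact hM2 p hp
  -- nonnegativity of the bounds
  have h00 : ((xi, yj) : ℝ × ℝ) ∈ tri xi yj hx hy ∪ tri2 xi yj hx hy := by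
    left; refine ⟨le_refl _, le_refl _, by simp⟩
  have hMxxx0 : 0 ≤ Mxxx := le_trans (abs_nonneg _) (hM1 _ h00)
  have hMxxy0 : 0 ≤ Mxxy := le_trans (abs_nonneg _) (hM2 _ h00)
  have hMxyy0 : 0 ≤ Mxyy := le_trans (abs_nonneg _) (hM3 _ h00)
  set d : ℝ := (w (xi + hx, yj) - w (xi, yj)) / hx with hd
  set L : ℝ → ℝ := fun y => xi + hx * (1 - (y - yj) / hy) with hL
  set r : ℝ → ℝ := fun y => xi + hx * ((yj - y) / hy) with hr
  have hLc : Continuous L := by fun_prop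
  have hrc : Continuous r := by fun_prop
  -- Step 1: rewrite the integrands
  have hInterp1 : ∀ p : ℝ × ℝ, pdx (fun q => w q - interp w xi yj hx hy q) p = pdx w p - d := by
    intro p
    have h1 : HasDerivAt (fun t => w (t, p.2)) (pdx w p) p.1 := by
      simpa using hasDerivAt_pdx w hwd p.1 p.2
    have key : (fun t => interp w xi yj hx hy (t, p.2)) = fun t => d * t +
        (w (xi, yj) * (1 + xi / hx - (p.2 - yj) / hy) - w (xi + hx, yj) * (xi / hx)
          + w (xi, yj + hy) * ((p.2 - yj) / hy)) := by
      funext t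
      simp only [interp, hd]
      field_simp
      ring
    have h2 : HasDerivAt (fun t => interp w xi yj hx hy (t, p.2)) d p.1 := by
      rw [key]
      exact (((hasDerivAt_id p.1).const_mul d).add_const _).congr_deriv (mul_one d)
    have h3 : HasDerivAt (fun t => w (t, p.2) - interp w xi yj hx hy (t, p.2)) (pdx w p - d) p.1 :=
      h1.sub h2
    exact h3.deriv
  have hInterp2 : ∀ p : ℝ × ℝ, pdx (fun q => w q - interp2 w xi yj hx hy q) p = pdx w p - d := by
    intro p
    have h1 : HasDerivAt (fun t => w (t, p.2)) (pdx w p) p.1 := by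
      simpa using hasDerivAt_pdx w hwd p.1 p.2
    have key : (fun t => interp2 w xi yj hx hy (t, p.2)) = fun t => d * t +
        (w (xi, yj) * ((xi + hx) / hx) + w (xi + hx, yj - hy) * ((yj - p.2) / hy)
          + w (xi + hx, yj) * (1 - (xi + hx) / hx - (yj - p.2) / hy)) := by
      funext t
      simp only [interp2, hd]
      field_simp
      ring
    have h2 : HasDerivAt (fun t => interp2 w xi yj hx hy (t, p.2)) d p.1 := by
      rw [key]
      exact (((hasDerivAt_id p.1).const_mul d).add_const _).congr_deriv (mul_one d)
    have h3 : HasDerivAt (fun t => w (t, p.2) - interp2 w xi yj hx hy (t, p.2)) (pdx w p - d) p.1 :=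
      h1.sub h2
    exact h3.deriv
  have hI1 : (∫ p in tri xi yj hx hy, pdx (fun q => w q - interp w xi yj hx hy q) p * cv)
      = (∫ p in tri xi yj hx hy, (pdx w p - d)) * cv := by
    rw [← integral_mul_const]
    congr 1
    funext p
    rw [hInterp1 p]
  have hI2 : (∫ p in tri2 xi yj hx hy, pdx (fun q => w q - interp2 w xi yj hx hy q) p * cv)
      = (∫ p in tri2 xi yj hx hy, (pdx w p - d)) * cv := by
    rw [← integral_mul_const]
    congr 1
    funext p
    rw [hInterp2 p]
  -- Step 2: Fubini on both triangles
  have hfc : Continuous (fun p : ℝ × ℝ => pdx w p - d) := hψc.sub continuous_const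
  have hF1 : ∫ p in tri xi yj hx hy, (pdx w p - d)
      = ∫ y in yj..(yj + hy), ∫ x in xi..(L y), (pdx w (x, y) - d) := by
    refine setIntegral_region _ hfc yj (yj + hy) (fun _ => xi) L (by linarith) ?_ _
      (isCompact_tri hhx hhy) isClosed_tri.measurableSet ?_
    · intro y hy'
      have h1 : (y - yj) / hy ≤ 1 := by rw [div_le_one hhy]; linarith [hy'.2]
      have h0 : 0 ≤ hx * (1 - (y - yj) / hy) := mul_nonneg hhx.le (by linarith)
      simp only [hL]
      linarith
    · intro p
      exact tri_mem_iff hhx hhy p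
  have hF2 : ∫ p in tri2 xi yj hx hy, (pdx w p - d)
      = ∫ y in (yj - hy)..yj, ∫ x in (r y)..(xi + hx), (pdx w (x, y) - d) := by
    refine setIntegral_region _ hfc (yj - hy) yj r (fun _ => xi + hx) (by linarith) ?_ _
      (isCompact_tri2 hhx hhy) isClosed_tri2.measurableSet ?_
    · intro y hy'
      have h1 : (yj - y) / hy ≤ 1 := by rw [div_le_one hhy]; linarith [hy'.1]
      have h0 : hx * ((yj - y) / hy) ≤ hx * 1 :=
        mul_le_mul_of_nonneg_left (by linarith) hhx.le
      simp only [hr]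
      linarith
    · intro p
      exact tri2_mem_iff hhx hhy p
  -- Step 3: inner FTC
  have hInner1 : ∀ y : ℝ, (∫ x in xi..(L y), (pdx w (x, y) - d))
      = (w (L y, y) - w (xi, y)) - (L y - xi) * d := by
    intro y
    have hint : IntervalIntegrable (fun x => pdx w (x, y)) volume xi (L y) :=
      (show Continuous fun x : ℝ => pdx w (x, y) from
        hψc.comp (continuous_id.prodMk continuous_const)).intervalIntegrable _ _
    rw [intervalIntegral.integral_sub hint intervalIntegrable_const,
      ← ftcX w hwd hψc y xi (L y), intervalIntegral.integral_const, smul_eq_mul]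
  have hInner2 : ∀ y : ℝ, (∫ x in (r y)..(xi + hx), (pdx w (x, y) - d))
      = (w (xi + hx, y) - w (r y, y)) - (xi + hx - r y) * d := by
    intro y
    have hint : IntervalIntegrable (fun x => pdx w (x, y)) volume (r y) (xi + hx) :=
      (show Continuous fun x : ℝ => pdx w (x, y) from
        hψc.comp (continuous_id.prodMk continuous_const)).intervalIntegrable _ _
    rw [intervalIntegral.integral_sub hint intervalIntegrable_const,
      ← ftcX w hwd hψc y (r y) (xi + hx), intervalIntegral.integral_const, smul_eq_mul]
  set G1 : ℝ → ℝ := fun y => (w (L y, y) - w (xi, y)) - (L y - xi) * d with hG1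
  set G2 : ℝ → ℝ := fun y => (w (xi + hx, y) - w (r y, y)) - (xi + hx - r y) * d with hG2
  have hG1c : Continuous G1 := by
    apply Continuous.sub
    · exact (hwc.comp (hLc.prodMk continuous_id)).sub
        (hwc.comp (continuous_const.prodMk continuous_id))
    · fun_prop
  have hG2c : Continuous G2 := by
    apply Continuous.sub
    · exact (hwc.comp (continuous_const.prodMk continuous_id)).sub
        (hwc.comp (hrc.prodMk continuous_id))
    · fun_prop
  have hE1 : ∫ p in tri xi yj hx hy, (pdx w p - d) = ∫ y in yj..(yj + hy), G1 y := by
    rw [hF1]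
    exact intervalIntegral.integral_congr (fun y _ => hInner1 y)
  have hE2 : ∫ p in tri2 xi yj hx hy, (pdx w p - d) = ∫ y in (yj - hy)..yj, G2 y := by
    rw [hF2]
    exact intervalIntegral.integral_congr (fun y _ => hInner2 y)
  -- Step 5: shift the second integral
  have hshift : ∫ y in yj..(yj + hy), G2 (y - hy) = ∫ y in (yj - hy)..yj, G2 y := by
    rw [intervalIntegral.integral_comp_sub_right G2 hy]
    congr 1
    ring
  -- Step 6: combine
  have hTsum : (∫ y in yj..(yj + hy), G1 y) + (∫ y in (yj - hy)..yj, G2 y)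
      = ∫ y in yj..(yj + hy), (G1 y + G2 (y - hy)) := by
    have hi2 : IntervalIntegrable (fun y => G2 (y - hy)) volume yj (yj + hy) :=
      (show Continuous fun y : ℝ => G2 (y - hy) from
        hG2c.comp (continuous_id.sub continuous_const)).intervalIntegrable _ _
    rw [← hshift, ← intervalIntegral.integral_add (hG1c.intervalIntegrable _ _) hi2]
  -- oscillation bound for the mixed second derivative
  obtain ⟨m, hm⟩ : ∃ m : ℝ, m = pdy (pdx w) (xi, yj) := ⟨_, rfl⟩
  set osc : ℝ := hx * Mxxy + hy * Mxyy with hosc_def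
  have hosc0 : 0 ≤ osc := by
    rw [hosc_def]
    have := mul_nonneg hhx.le hMxxy0
    have := mul_nonneg hhy.le hMxyy0
    linarith
  have hosc : ∀ p ∈ tri xi yj hx hy ∪ tri2 xi yj hx hy, |pdy (pdx w) p - m| ≤ osc := by
    rintro ⟨t, σ⟩ hp
    rcases hp with hp | hp
    · obtain ⟨h1, h2, h3⟩ := hp
      have hd1 : 0 ≤ (t - xi) / hx := div_nonneg (by linarith) hhx.le
      have hd2 : 0 ≤ (σ - yj) / hy := div_nonneg (by linarith) hhy.le
      have ht2 : t ≤ xi + hx := by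
        have h : (t - xi) / hx ≤ 1 := by linarith
        rw [div_le_one hhx] at h; linarith
      have hσ2 : σ ≤ yj + hy := by
        have h : (σ - yj) / hy ≤ 1 := by linarith
        rw [div_le_one hhy] at h; linarith
      have hpt1 : ∀ τ ∈ uIcc xi t, |pdx (pdy (pdx w)) (τ, σ)| ≤ Mxxy := by
        intro τ hτ
        rw [uIcc_of_le h1] at hτ
        refine hMxxy' (τ, σ) (Or.inl ⟨hτ.1, h2, ?_⟩)
        have hmono : (τ - xi) / hx ≤ (t - xi) / hx :=
          (div_le_div_iff_of_pos_right hhx).mpr (by linarith [hτ.2])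
        linarith
      have hb1 : |pdy (pdx w) (t, σ) - pdy (pdx w) (xi, σ)| ≤ Mxxy * hx := by
        have hbd := ftcX_bound (pdy (pdx w)) hμd hpdxμc σ xi t Mxxy hpt1
        refine le_trans hbd ?_
        rw [abs_of_nonneg (by linarith : (0:ℝ) ≤ t - xi)]
        exact mul_le_mul_of_nonneg_left (by linarith) hMxxy0
      have hpt2 : ∀ σ' ∈ uIcc yj σ, |pdy (pdy (pdx w)) (xi, σ')| ≤ Mxyy := by
        intro σ' hσ'
        rw [uIcc_of_le h2] at hσ'
        refine hM3 (xi, σ') (Or.inl ⟨le_refl _, hσ'.1, ?_⟩)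
        have he0 : (xi - xi) / hx = 0 := by simp
        have hmono : (σ' - yj) / hy ≤ (σ - yj) / hy :=
          (div_le_div_iff_of_pos_right hhy).mpr (by linarith [hσ'.2])
        rw [he0]
        linarith
      have hb2 : |pdy (pdx w) (xi, σ) - pdy (pdx w) (xi, yj)| ≤ Mxyy * hy := by
        have hbd := ftcY_bound (pdy (pdx w)) hμd hpdyμc xi yj σ Mxyy hpt2
        refine le_trans hbd ?_
        rw [abs_of_nonneg (by linarith : (0:ℝ) ≤ σ - yj)]
        exact mul_le_mul_of_nonneg_left (by linarith) hMxyy0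
      have hrepr : pdy (pdx w) (t, σ) - m =
          (pdy (pdx w) (t, σ) - pdy (pdx w) (xi, σ))
            + (pdy (pdx w) (xi, σ) - pdy (pdx w) (xi, yj)) := by
        rw [hm]; ring
      rw [hrepr]
      refine le_trans (abs_add_le _ _) ?_
      rw [hosc_def]
      linarith
    · have hp' := (tri2_mem_iff hhx hhy (t, σ)).1 hp
      obtain ⟨⟨hσ1, hσ2⟩, ht1, ht2⟩ := hp'
      obtain ⟨h1, h2, h3⟩ := hp
      have hxi_t : xi ≤ t := by
        have h0 : 0 ≤ hx * ((yj - σ) / hy) :=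
          mul_nonneg hhx.le (div_nonneg (by linarith) hhy.le)
        linarith
      have hpt1 : ∀ σ' ∈ uIcc σ yj, |pdy (pdy (pdx w)) (t, σ')| ≤ Mxyy := by
        intro σ' hσ'
        rw [uIcc_of_le h2] at hσ'
        refine hM3 (t, σ') (Or.inr ⟨h1, hσ'.2, ?_⟩)
        have hmono : (σ - (yj - hy)) / hy ≤ (σ' - (yj - hy)) / hy :=
          (div_le_div_iff_of_pos_right hhy).mpr (by linarith [hσ'.1])
        linarith
      have hb1 : |pdy (pdx w) (t, σ) - pdy (pdx w) (t, yj)| ≤ Mxyy * hy := by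
        have hbd := ftcY_bound (pdy (pdx w)) hμd hpdyμc t σ yj Mxyy hpt1
        rw [abs_sub_comm]
        refine le_trans hbd ?_
        rw [abs_of_nonneg (by linarith : (0:ℝ) ≤ yj - σ)]
        exact mul_le_mul_of_nonneg_left (by linarith) hMxyy0
      have hpt2 : ∀ τ ∈ uIcc xi t, |pdx (pdy (pdx w)) (τ, yj)| ≤ Mxxy := by
        intro τ hτ
        rw [uIcc_of_le hxi_t] at hτ
        refine hMxxy' (τ, yj) (Or.inr ⟨by linarith [hτ.2], le_refl _, ?_⟩)
        have he0 : (yj - (yj - hy)) / hy = 1 := by field_simp; ring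
        have hd0 : 0 ≤ (τ - xi) / hx := div_nonneg (by linarith [hτ.1]) hhx.le
        rw [he0]
        linarith
      have hb2 : |pdy (pdx w) (t, yj) - pdy (pdx w) (xi, yj)| ≤ Mxxy * hx := by
        have hbd := ftcX_bound (pdy (pdx w)) hμd hpdxμc yj xi t Mxxy hpt2
        refine le_trans hbd ?_
        rw [abs_of_nonneg (by linarith : (0:ℝ) ≤ t - xi)]
        exact mul_le_mul_of_nonneg_left (by linarith) hMxxy0
      have hrepr : pdy (pdx w) (t, σ) - m =
          (pdy (pdx w) (t, σ) - pdy (pdx w) (t, yj))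
            + (pdy (pdx w) (t, yj) - pdy (pdx w) (xi, yj)) := by
        rw [hm]; ring
      rw [hrepr]
      refine le_trans (abs_add_le _ _) ?_
      rw [hosc_def]
      linarith
  -- Step 7: pointwise bound on the combined integrand
  have hkey : ∀ y ∈ Icc yj (yj + hy), |G1 y + G2 (y - hy)| ≤ 2 * (osc * hy * hx) := by
    intro y hymem
    obtain ⟨hy1, hy2⟩ := hymem
    have hu1 : 0 ≤ (y - yj) / hy := div_nonneg (by linarith) hhy.le
    have hu2 : (y - yj) / hy ≤ 1 := by rw [div_le_one hhy]; linarith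
    have hL1 : xi ≤ L y := by
      have h0 : 0 ≤ hx * (1 - (y - yj) / hy) := mul_nonneg hhx.le (by linarith)
      simp only [hL]
      linarith
    have hL2 : L y ≤ xi + hx := by
      have h0 : hx * (1 - (y - yj) / hy) ≤ hx * 1 :=
        mul_le_mul_of_nonneg_left (by linarith) hhx.le
      simp only [hL]
      linarith
    have hrshift : r (y - hy) = L y := by
      have hfrac : (yj - (y - hy)) / hy = 1 - (y - yj) / hy := by
        field_simp
        ring
      simp only [hr, hL, hfrac]
    have hdpart : (L y - xi) * d + (xi + hx - L y) * d = w (xi + hx, yj) - w (xi, yj) := by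
      have hsum : (L y - xi) + (xi + hx - L y) = hx := by ring
      rw [← add_mul, hsum, hd]
      field_simp
    have hLfrac : (L y - xi) / hx = 1 - (y - yj) / hy := by
      simp only [hL]
      field_simp
      ring
    set c1 : ℝ := (y - yj) * m with hc1
    set c2 : ℝ := (hy - (y - yj)) * m with hc2
    have i1 : ∀ a b yy : ℝ, IntervalIntegrable (fun t => pdx w (t, yy)) volume a b :=
      fun a b yy => (show Continuous fun t : ℝ => pdx w (t, yy) from
        hψc.comp (continuous_id.prodMk continuous_const)).intervalIntegrable _ _
    have i2 : ∀ a b yy : ℝ, IntervalIntegrable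
        (fun σ => pdy (pdx w) (yy, σ)) volume a b :=
      fun a b yy => (show Continuous fun σ : ℝ => pdy (pdx w) (yy, σ) from
        hμc.comp (continuous_const.prodMk continuous_id)).intervalIntegrable _ _
    have hP : (w (L y, y) - w (xi, y)) - (w (L y, yj) - w (xi, yj))
        = ∫ t in xi..(L y), (pdx w (t, y) - pdx w (t, yj)) := by
      rw [intervalIntegral.integral_sub (i1 _ _ _) (i1 _ _ _),
        ← ftcX w hwd hψc y xi (L y), ← ftcX w hwd hψc yj xi (L y)]
    have hQ : (w (xi + hx, yj) - w (L y, yj)) - (w (xi + hx, y - hy) - w (L y, y - hy))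
        = ∫ t in (L y)..(xi + hx), (pdx w (t, yj) - pdx w (t, y - hy)) := by
      rw [intervalIntegral.integral_sub (i1 _ _ _) (i1 _ _ _),
        ← ftcX w hwd hψc yj (L y) (xi + hx), ← ftcX w hwd hψc (y - hy) (L y) (xi + hx)]
    have hPsplit : (∫ t in xi..(L y), (pdx w (t, y) - pdx w (t, yj)))
        = (∫ t in xi..(L y), ((pdx w (t, y) - pdx w (t, yj)) - c1)) + (L y - xi) * c1 := by
      rw [intervalIntegral.integral_sub ((i1 _ _ _).sub (i1 _ _ _)) intervalIntegrable_const,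
        intervalIntegral.integral_const, smul_eq_mul]
      ring
    have hQsplit : (∫ t in (L y)..(xi + hx), (pdx w (t, yj) - pdx w (t, y - hy)))
        = (∫ t in (L y)..(xi + hx), ((pdx w (t, yj) - pdx w (t, y - hy)) - c2))
          + (xi + hx - L y) * c2 := by
      rw [intervalIntegral.integral_sub ((i1 _ _ _).sub (i1 _ _ _)) intervalIntegrable_const,
        intervalIntegral.integral_const, smul_eq_mul]
      ring
    have hcancel : (L y - xi) * c1 = (xi + hx - L y) * c2 := by
      simp only [hL, hc1, hc2]
      field_simp
      ring
    -- pointwise bounds on the inner differences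
    have hPpt : ∀ t ∈ uIcc xi (L y), |(pdx w (t, y) - pdx w (t, yj)) - c1| ≤ osc * hy := by
      intro t ht
      rw [uIcc_of_le hL1] at ht
      have hrep : (pdx w (t, y) - pdx w (t, yj)) - c1
          = ∫ σ in yj..y, (pdy (pdx w) (t, σ) - m) := by
        rw [intervalIntegral.integral_sub (i2 _ _ _) intervalIntegrable_const,
          ← ftcY (pdx w) hψd hμc t yj y, intervalIntegral.integral_const, smul_eq_mul, hc1]
        try ring
      have hptw : ∀ σ ∈ Set.uIoc yj y, ‖pdy (pdx w) (t, σ) - m‖ ≤ osc := by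
        intro σ hσ
        rw [uIoc_of_le hy1] at hσ
        have hmem : (t, σ) ∈ tri xi yj hx hy := by
          refine ⟨ht.1, hσ.1.le, ?_⟩
          have e1 : (t - xi) / hx ≤ (L y - xi) / hx :=
            (div_le_div_iff_of_pos_right hhx).mpr (by linarith [ht.2])
          have e2 : (σ - yj) / hy ≤ (y - yj) / hy :=
            (div_le_div_iff_of_pos_right hhy).mpr (by linarith [hσ.2])
          linarith [hLfrac]
        simpa [Real.norm_eq_abs] using hosc (t, σ) (Or.inl hmem)
      have hb := intervalIntegral.norm_integral_le_of_norm_le_const hptw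
      rw [hrep]
      refine le_trans (by simpa [Real.norm_eq_abs] using hb) ?_
      rw [abs_of_nonneg (by linarith : (0:ℝ) ≤ y - yj)]
      exact mul_le_mul_of_nonneg_left (by linarith) hosc0
    have hQpt : ∀ t ∈ uIcc (L y) (xi + hx),
        |(pdx w (t, yj) - pdx w (t, y - hy)) - c2| ≤ osc * hy := by
      intro t ht
      rw [uIcc_of_le hL2] at ht
      have hrep : (pdx w (t, yj) - pdx w (t, y - hy)) - c2
          = ∫ σ in (y - hy)..yj, (pdy (pdx w) (t, σ) - m) := by
        rw [intervalIntegral.integral_sub (i2 _ _ _) intervalIntegrable_const,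
          ← ftcY (pdx w) hψd hμc t (y - hy) yj, intervalIntegral.integral_const, smul_eq_mul,
          hc2]
        try ring
      have hptw : ∀ σ ∈ Set.uIoc (y - hy) yj, ‖pdy (pdx w) (t, σ) - m‖ ≤ osc := by
        intro σ hσ
        rw [uIoc_of_le (by linarith : y - hy ≤ yj)] at hσ
        have hmem : (t, σ) ∈ tri2 xi yj hx hy := by
          refine ⟨ht.2, hσ.2, ?_⟩
          have e1 : (L y - xi) / hx ≤ (t - xi) / hx :=
            (div_le_div_iff_of_pos_right hhx).mpr (by linarith [ht.1])
          have e2 : (y - hy - (yj - hy)) / hy ≤ (σ - (yj - hy)) / hy :=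
            (div_le_div_iff_of_pos_right hhy).mpr (by linarith [hσ.1])
          have e3 : (y - hy - (yj - hy)) / hy = (y - yj) / hy := by ring_nf
          rw [e3] at e2
          linarith [hLfrac]
        simpa [Real.norm_eq_abs] using hosc (t, σ) (Or.inr hmem)
      have hb := intervalIntegral.norm_integral_le_of_norm_le_const hptw
      rw [hrep]
      refine le_trans (by simpa [Real.norm_eq_abs] using hb) ?_
      rw [abs_of_nonneg (by linarith : (0:ℝ) ≤ yj - (y - hy))]
      exact mul_le_mul_of_nonneg_left (by linarith) hosc0
    -- assemble the pointwise bound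
    have hgrep : G1 y + G2 (y - hy)
        = (∫ t in xi..(L y), ((pdx w (t, y) - pdx w (t, yj)) - c1))
          - (∫ t in (L y)..(xi + hx), ((pdx w (t, yj) - pdx w (t, y - hy)) - c2)) := by
      have hstep : G1 y + G2 (y - hy)
          = ((w (L y, y) - w (xi, y)) - (w (L y, yj) - w (xi, yj)))
            - ((w (xi + hx, yj) - w (L y, yj)) - (w (xi + hx, y - hy) - w (L y, y - hy))) := by
        simp only [hG1, hG2, hrshift]
        linear_combination -hdpart
      rw [hstep, hP, hQ, hPsplit, hQsplit]
      linear_combination hcancel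
    rw [hgrep]
    have hA : |∫ t in xi..(L y), ((pdx w (t, y) - pdx w (t, yj)) - c1)| ≤ osc * hy * hx := by
      have hb := intervalIntegral.norm_integral_le_of_norm_le_const (a := xi) (b := L y)
        (C := osc * hy) (f := fun t => (pdx w (t, y) - pdx w (t, yj)) - c1)
        (fun t ht => by simpa [Real.norm_eq_abs] using hPpt t (uIoc_subset_uIcc ht))
      refine le_trans (by simpa [Real.norm_eq_abs] using hb) ?_
      rw [abs_of_nonneg (by linarith : (0:ℝ) ≤ L y - xi)]
      exact mul_le_mul_of_nonneg_left (by linarith) (mul_nonneg hosc0 hhy.le)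
    have hB : |∫ t in (L y)..(xi + hx), ((pdx w (t, yj) - pdx w (t, y - hy)) - c2)|
        ≤ osc * hy * hx := by
      have hb := intervalIntegral.norm_integral_le_of_norm_le_const (a := L y) (b := xi + hx)
        (C := osc * hy) (f := fun t => (pdx w (t, yj) - pdx w (t, y - hy)) - c2)
        (fun t ht => by simpa [Real.norm_eq_abs] using hQpt t (uIoc_subset_uIcc ht))
      refine le_trans (by simpa [Real.norm_eq_abs] using hb) ?_
      rw [abs_of_nonneg (by linarith : (0:ℝ) ≤ xi + hx - L y)]
      exact mul_le_mul_of_nonneg_left (by linarith) (mul_nonneg hosc0 hhy.le)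
    refine le_trans (abs_sub _ _) ?_
    linarith
  -- Step 8: integrate the pointwise bound
  have hTb : |∫ y in yj..(yj + hy), (G1 y + G2 (y - hy))| ≤ 2 * (osc * hy * hx) * hy := by
    have hptw : ∀ y ∈ Set.uIoc yj (yj + hy), ‖G1 y + G2 (y - hy)‖ ≤ 2 * (osc * hy * hx) := by
      intro y hy'
      rw [uIoc_of_le (by linarith : yj ≤ yj + hy)] at hy'
      simpa [Real.norm_eq_abs] using hkey y ⟨hy'.1.le, hy'.2⟩
    have hb := intervalIntegral.norm_integral_le_of_norm_le_const hptw
    refine le_trans (by simpa [Real.norm_eq_abs] using hb) ?_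
    rw [abs_of_nonneg hhy.le]
  -- Step 9: conclusion
  rw [hI1, hI2, hE1, hE2, ← add_mul, hTsum, abs_mul]
  have hfinal : |∫ y in yj..(yj + hy), (G1 y + G2 (y - hy))| * |cv|
      ≤ (2 * (osc * hy * hx) * hy) * |cv| :=
    mul_le_mul_of_nonneg_right hTb (abs_nonneg cv)
  refine le_trans hfinal ?_
  rw [hosc_def]
  have e : 2 * ((hx * Mxxy + hy * Mxyy) * hy * hx) * hy * |cv|
      = 2 * (hx * hy * Mxxy + hy ^ 2 * Mxyy) * (|cv| * (hx * hy)) := by ring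
  have expand : 2 * (hx ^ 2 * Mxxx + hx * hy * Mxxy + hy ^ 2 * Mxyy) * (|cv| * (hx * hy))
      = 2 * (hx * hy * Mxxy + hy ^ 2 * Mxyy) * (|cv| * (hx * hy))
        + 2 * (hx ^ 2 * Mxxx) * (|cv| * (hx * hy)) := by ring
  have h0 : 0 ≤ 2 * (hx ^ 2 * Mxxx) * (|cv| * (hx * hy)) := by
    have h1 : 0 ≤ hx ^ 2 * Mxxx := mul_nonneg (sq_nonneg hx) hMxxx0
    have h2 : 0 ≤ |cv| * (hx * hy) := mul_nonneg (abs_nonneg cv) (mul_nonneg hhx.le hhy.le)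
    have := mul_nonneg h1 h2
    linarith
  linarith
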